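/- arXiv:math/0608228 — 3 statements merged into one kernel-verified Lean document; each statement's English description precedes it below -/
import Mathlib

section
/- Let A be a small abelian category with enough projective objects. Then the canonical embedding A \to Ind(A) carries projective objects of A to projective objects of Ind(A), and Ind(A) has enough projectives: every object of Ind(A) admits an epimorphism from a projective object. -/
open CategoryTheory Limits

open CategoryTheory Limits Opposite

universe u

set_option linter.unusedSectionVars false

namespace IndProjAux

variable {A : Type u} [SmallCategory A] [Abelian A]

section ColimitLemmas
variable {I : Type u} [SmallCategory I] [IsFiltered I] {G : I ⥤ A}
lemma exists_rep {c : Cocone (G ⋙ yoneda)} (hc : IsColimit c) {a : A}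
    (x : yoneda.obj a ⟶ c.pt) :
    ∃ (j : I) (e : a ⟶ G.obj j), x = yoneda.map e ≫ c.ι.app j := by
  have hc' := isColimitOfPreserves ((evaluation Aᵒᵖ (Type u)).obj (op a)) hc
  obtain ⟨j, e, he⟩ := Types.jointly_surjective _ hc' (yonedaEquiv x)
  refine ⟨j, e, yonedaEquiv.injective ?_⟩
  rw [yonedaEquiv_comp, yonedaEquiv_yoneda_map]
  exact he.symm
lemma rep_eq {c : Cocone (G ⋙ yoneda)} (hc : IsColimit c) {a : A} {j j' : I}
    (e : a ⟶ G.obj j) (e' : a ⟶ G.obj j')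
    (h : yoneda.map e ≫ c.ι.app j = yoneda.map e' ≫ c.ι.app j') :
    ∃ (k : I) (t : j ⟶ k) (t' : j' ⟶ k), e ≫ G.map t = e' ≫ G.map t' := by
  have hc' := isColimitOfPreserves ((evaluation Aᵒᵖ (Type u)).obj (op a)) hc
  have h' := congrArg yonedaEquiv h
  rw [yonedaEquiv_comp, yonedaEquiv_yoneda_map, yonedaEquiv_comp, yonedaEquiv_yoneda_map] at h'
  exact (Types.FilteredColimit.isColimit_eq_iff _ hc' (xi := e) (xj := e')).mp h'
lemma cocone_nat (c : Cocone (G ⋙ yoneda)) {a : A} {j k : I} (e : a ⟶ G.obj j) (t : j ⟶ k) :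
    yoneda.map (e ≫ G.map t) ≫ c.ι.app k = yoneda.map e ≫ c.ι.app j := by
  rw [yoneda.map_comp, Category.assoc]
  congr 1
  exact c.w t
end ColimitLemmas

/-- Cancellation: maps out of representables into an ind-object can be cancelled along
yoneda images of epimorphisms of `A`. -/
lemma cancel_yoneda_epi {Z : Aᵒᵖ ⥤ Type u} (hZ : IsIndObject Z) {a b : A} (π : b ⟶ a) [Epi π]
    {u v : yoneda.obj a ⟶ Z} (h : yoneda.map π ≫ u = yoneda.map π ≫ v) : u = v := by
  let p := hZ.presentation
  obtain ⟨j, e, he⟩ := exists_rep p.coconeIsColimit (a := a) u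
  obtain ⟨j', e', he'⟩ := exists_rep p.coconeIsColimit (a := a) v
  have h2 : yoneda.map (π ≫ e) ≫ p.cocone.ι.app j = yoneda.map (π ≫ e') ≫ p.cocone.ι.app j' := by
    rw [yoneda.map_comp, yoneda.map_comp, Category.assoc, Category.assoc, ← he, ← he']
    exact h
  obtain ⟨k, t, t', ht⟩ := rep_eq p.coconeIsColimit _ _ h2
  rw [Category.assoc, Category.assoc] at ht
  have ht' : e ≫ p.F.map t = e' ≫ p.F.map t' := by
    rwa [cancel_epi π] at ht
  rw [he, he', ← cocone_nat p.cocone e t, ← cocone_nat p.cocone e' t', ht']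

/-- The criterion implies epi in the category of ind-objects. -/
lemma epi_of_criterion {W X : ObjectProperty.FullSubcategory (IsIndObject (C := A))} (f : W ⟶ X)
    (h : ∀ (a : A) (x : yoneda.obj a ⟶ X.obj), ∃ (b : A) (π : b ⟶ a) (_ : Epi π)
      (w : yoneda.obj b ⟶ W.obj),
      w ≫ (ObjectProperty.ι _).map f = yoneda.map π ≫ x) : Epi f := by
  constructor
  intro V g g' hgg
  have key : ∀ (a : A) (x : yoneda.obj a ⟶ X.obj),
      x ≫ (ObjectProperty.ι _).map g = x ≫ (ObjectProperty.ι _).map g' := by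
    intro a x
    obtain ⟨b, π, hπ, w, hw⟩ := h a x
    haveI := hπ
    apply cancel_yoneda_epi V.2 π
    have h1 : (w ≫ (ObjectProperty.ι _).map f) ≫ (ObjectProperty.ι _).map g
        = (w ≫ (ObjectProperty.ι _).map f) ≫ (ObjectProperty.ι _).map g' := by
      rw [Category.assoc, Category.assoc, ← Functor.map_comp, ← Functor.map_comp, hgg]
    rw [hw] at h1
    rw [Category.assoc, Category.assoc] at h1
    rw [← Category.assoc, ← Category.assoc] at h1
    simpa using h1
  apply (ObjectProperty.ι (IsIndObject (C := A))).map_injective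
  apply NatTrans.ext
  ext aop el
  have := congrArg yonedaEquiv (key aop.unop (yonedaEquiv.symm el))
  rwa [yonedaEquiv_comp, yonedaEquiv_comp, Equiv.apply_symm_apply] at this


section Gadget

variable {WO ZO : Aᵒᵖ ⥤ Type u} (pW : IndObjectPresentation WO) (pZ : IndObjectPresentation ZO)
  (f : WO ⟶ ZO)

/-- The category of approximations of the morphism `f` by morphisms of `A`. -/
structure Gadget where
  i : pW.I
  j : pZ.I
  φ : pW.F.obj i ⟶ pZ.F.obj j
  comm : yoneda.map φ ≫ pZ.cocone.ι.app j = pW.cocone.ι.app i ≫ f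

namespace Gadget

variable {pW pZ f}

@[ext]
structure Hom (k k' : Gadget pW pZ f) where
  gi : k.i ⟶ k'.i
  gj : k.j ⟶ k'.j
  comm : pW.F.map gi ≫ k'.φ = k.φ ≫ pZ.F.map gj

instance : Category (Gadget pW pZ f) where
  Hom := Hom
  id k := ⟨𝟙 k.i, 𝟙 k.j, by simp⟩
  comp {k k' k''} u v := ⟨u.gi ≫ v.gi, u.gj ≫ v.gj, by
    rw [Functor.map_comp, Functor.map_comp, Category.assoc, v.comm, ← Category.assoc, u.comm,
      Category.assoc]⟩
  id_comp u := Hom.ext (by simp) (by simp)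
  comp_id u := Hom.ext (by simp) (by simp)
  assoc u v w := Hom.ext (by simp) (by simp)

@[simp] lemma id_gi (k : Gadget pW pZ f) : (Hom.gi (𝟙 k)) = 𝟙 k.i := rfl
@[simp] lemma id_gj (k : Gadget pW pZ f) : (Hom.gj (𝟙 k)) = 𝟙 k.j := rfl
@[simp] lemma comp_gi {k k' k'' : Gadget pW pZ f} (u : k ⟶ k') (v : k' ⟶ k'') :
    (u ≫ v).gi = u.gi ≫ v.gi := rfl
@[simp] lemma comp_gj {k k' k'' : Gadget pW pZ f} (u : k ⟶ k') (v : k' ⟶ k'') :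
    (u ≫ v).gj = u.gj ≫ v.gj := rfl

/-- Build a gadget from a factorization of a cocone leg. -/
lemma exists_gadget (pW : IndObjectPresentation WO) (pZ : IndObjectPresentation ZO) (f : WO ⟶ ZO) (i : pW.I) : ∃ k : Gadget pW pZ f, k.i = i := by
  obtain ⟨j, ψ, hψ⟩ := exists_rep pZ.coconeIsColimit (pW.cocone.ι.app i ≫ f)
  exact ⟨⟨i, j, ψ, hψ.symm⟩, rfl⟩

instance (pW : IndObjectPresentation WO) (pZ : IndObjectPresentation ZO) (f : WO ⟶ ZO) : Nonempty (Gadget pW pZ f) := by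
  obtain ⟨k, -⟩ := exists_gadget pW pZ f (IsFiltered.nonempty.some)
  exact ⟨k⟩

/-- pushing a gadget along a morphism in `pZ.I`. -/
@[simps]
def push (k : Gadget pW pZ f) {j' : pZ.I} (t : k.j ⟶ j') : Gadget pW pZ f where
  i := k.i
  j := j'
  φ := k.φ ≫ pZ.F.map t
  comm := by rw [cocone_nat pZ.cocone k.φ t, k.comm]

/-- The morphism into the pushed gadget. -/
@[simps]
def pushHom (k : Gadget pW pZ f) {j' : pZ.I} (t : k.j ⟶ j') : k ⟶ k.push t :=
  ⟨𝟙 k.i, t, by simp [push]⟩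

variable (pW pZ f) in
/-- helper: factor a transported gadget morphism -/
lemma key_fact {i₂ : pW.I} {j₀ : pZ.I} {ψ₀ : pW.F.obj i₂ ⟶ pZ.F.obj j₀}
    (hψ₀ : pW.cocone.ι.app i₂ ≫ f = yoneda.map ψ₀ ≫ pZ.cocone.ι.app j₀)
    (k : Gadget pW pZ f) (si : k.i ⟶ i₂) :
    ∃ (j₁ : pZ.I) (t₀ : j₀ ⟶ j₁) (t : k.j ⟶ j₁),
      (pW.F.map si ≫ ψ₀) ≫ pZ.F.map t₀ = k.φ ≫ pZ.F.map t := by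
  apply rep_eq pZ.coconeIsColimit
  have hw : yoneda.map (pW.F.map si) ≫ pW.cocone.ι.app i₂ = pW.cocone.ι.app k.i :=
    pW.cocone.w si
  rw [yoneda.map_comp, Category.assoc, ← hψ₀]
  erw [← Category.assoc, hw, k.comm]; rfl

instance : IsFilteredOrEmpty (Gadget pW pZ f) where
  cocone_objs k k' := by
    obtain ⟨j₀, ψ₀, hψ₀⟩ := exists_rep pZ.coconeIsColimit
      (pW.cocone.ι.app (IsFiltered.max k.i k'.i) ≫ f)
    obtain ⟨j₁, t₀, t, ht⟩ := key_fact pW pZ f hψ₀ k (IsFiltered.leftToMax _ _)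
    obtain ⟨j₂, t₀', t', ht'⟩ := key_fact pW pZ f hψ₀ k' (IsFiltered.rightToMax _ _)
    refine ⟨⟨IsFiltered.max k.i k'.i, _,
        ψ₀ ≫ pZ.F.map ((t₀ ≫ IsFiltered.leftToMax j₁ j₂) ≫
          IsFiltered.coeqHom (t₀ ≫ IsFiltered.leftToMax j₁ j₂)
            (t₀' ≫ IsFiltered.rightToMax j₁ j₂)),
        by rw [cocone_nat, ← hψ₀]; rfl⟩,
      ⟨IsFiltered.leftToMax k.i k'.i,
        t ≫ IsFiltered.leftToMax j₁ j₂ ≫ IsFiltered.coeqHom _ _, ?_⟩,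
      ⟨IsFiltered.rightToMax k.i k'.i,
        t' ≫ IsFiltered.rightToMax j₁ j₂ ≫ IsFiltered.coeqHom _ _, ?_⟩, trivial⟩
    · simp only [Functor.map_comp, Category.assoc]
      rw [reassoc_of% ht]
    · rw [IsFiltered.coeq_condition (t₀ ≫ IsFiltered.leftToMax j₁ j₂)
        (t₀' ≫ IsFiltered.rightToMax j₁ j₂)]
      simp only [Functor.map_comp, Category.assoc]
      rw [reassoc_of% ht']
  cocone_maps k k' u v := by
    obtain ⟨j₀, ψ₀, hψ₀⟩ := exists_rep pZ.coconeIsColimit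
      (pW.cocone.ι.app (IsFiltered.coeq u.gi v.gi) ≫ f)
    obtain ⟨j₂, t₀, t₁, ht⟩ := key_fact pW pZ f hψ₀ k' (IsFiltered.coeqHom u.gi v.gi)
    refine ⟨⟨IsFiltered.coeq u.gi v.gi, IsFiltered.coeq (u.gj ≫ t₁) (v.gj ≫ t₁),
        ψ₀ ≫ pZ.F.map (t₀ ≫ IsFiltered.coeqHom (u.gj ≫ t₁) (v.gj ≫ t₁)),
        by rw [cocone_nat, ← hψ₀]; rfl⟩,
      ⟨IsFiltered.coeqHom u.gi v.gi, t₁ ≫ IsFiltered.coeqHom (u.gj ≫ t₁) (v.gj ≫ t₁), ?_⟩, ?_⟩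
    · simp only [Functor.map_comp, Category.assoc]
      rw [reassoc_of% ht]
    · apply Hom.ext
      · simpa using IsFiltered.coeq_condition u.gi v.gi
      · simpa [Category.assoc] using IsFiltered.coeq_condition (u.gj ≫ t₁) (v.gj ≫ t₁)

variable (pW pZ f) in
instance : IsFiltered (Gadget pW pZ f) where

variable (pW pZ f) in
/-- projection to the indexing category of `Z`. -/
@[simps]
def proj : Gadget pW pZ f ⥤ pZ.I where
  obj := Gadget.j
  map := Hom.gj
  map_id _ := rfl
  map_comp _ _ := rfl

variable (pW pZ f) in
instance : (proj pW pZ f).Final := by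
  rw [Functor.final_iff_of_isFiltered]
  constructor
  · intro j
    obtain ⟨k₀⟩ := (inferInstance : Nonempty (Gadget pW pZ f))
    exact ⟨k₀.push (IsFiltered.rightToMax j k₀.j), ⟨IsFiltered.leftToMax j k₀.j⟩⟩
  · intro j k s s'
    refine ⟨k.push (IsFiltered.coeqHom s s'), k.pushHom _, ?_⟩
    exact IsFiltered.coeq_condition s s'

end Gadget

end Gadget


section Main

variable {WO ZO : Aᵒᵖ ⥤ Type u} (pW : IndObjectPresentation WO) (pZ : IndObjectPresentation ZO)
  (f : WO ⟶ ZO)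

/-- The cokernel approximation functor. -/
@[simps]
noncomputable def cokerF : Gadget pW pZ f ⥤ A where
  obj k := cokernel k.φ
  map {k k'} u := cokernel.map _ _ (pW.F.map u.gi) (pZ.F.map u.gj) u.comm.symm
  map_id k := by apply coequalizer.hom_ext; simp
  map_comp u v := by apply coequalizer.hom_ext; simp

/-- The transformation from the presentation of Z to the cokernels. -/
@[simps]
noncomputable def toCoker : Gadget.proj pW pZ f ⋙ (pZ.F ⋙ yoneda) ⟶ cokerF pW pZ f ⋙ yoneda where
  app k := yoneda.map (cokernel.π k.φ)
  naturality k k' u := by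
    dsimp
    erw [← Functor.map_comp, ← Functor.map_comp]
    congr 1
    exact (cokernel.π_desc _ _ _).symm

/-- The zero transformation from the presentation of Z to the cokernels. -/
@[simps]
noncomputable def toCokerZero :
    Gadget.proj pW pZ f ⋙ (pZ.F ⋙ yoneda) ⟶ cokerF pW pZ f ⋙ yoneda where
  app k := yoneda.map 0
  naturality k k' u := by
    dsimp
    rw [← Functor.map_comp, ← Functor.map_comp, comp_zero, zero_comp]

/-- The quotient map `Z ⟶ Z/im f`. -/
noncomputable def gmap : ZO ⟶ colimit (cokerF pW pZ f ⋙ yoneda) :=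
  (pZ.coconeIsColimit.coconePointUniqueUpToIso (colimit.isColimit (pZ.F ⋙ yoneda))).hom ≫
    (Functor.Final.colimitIso (Gadget.proj pW pZ f) (pZ.F ⋙ yoneda)).inv ≫
    colimMap (toCoker pW pZ f)

/-- The zero map `Z ⟶ Z/im f`. -/
noncomputable def zmap : ZO ⟶ colimit (cokerF pW pZ f ⋙ yoneda) :=
  (pZ.coconeIsColimit.coconePointUniqueUpToIso (colimit.isColimit (pZ.F ⋙ yoneda))).hom ≫
    (Functor.Final.colimitIso (Gadget.proj pW pZ f) (pZ.F ⋙ yoneda)).inv ≫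
    colimMap (toCokerZero pW pZ f)

lemma ι_gmap (k : Gadget pW pZ f) :
    pZ.cocone.ι.app k.j ≫ gmap pW pZ f =
      yoneda.map (cokernel.π k.φ) ≫ colimit.ι (cokerF pW pZ f ⋙ yoneda) k := by
  rw [gmap]; erw [← Category.assoc, IsColimit.comp_coconePointUniqueUpToIso_hom, ← Category.assoc,
    show (colimit.cocone (pZ.F ⋙ yoneda)).ι.app k.j =
      colimit.ι (pZ.F ⋙ yoneda) ((Gadget.proj pW pZ f).obj k) from rfl,
    Functor.Final.ι_colimitIso_inv (Gadget.proj pW pZ f) (pZ.F ⋙ yoneda) k, ι_colimMap]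
  rfl

lemma ι_zmap (k : Gadget pW pZ f) :
    pZ.cocone.ι.app k.j ≫ zmap pW pZ f =
      yoneda.map (0 : pZ.F.obj k.j ⟶ cokernel k.φ) ≫ colimit.ι (cokerF pW pZ f ⋙ yoneda) k := by
  rw [zmap]; erw [← Category.assoc, IsColimit.comp_coconePointUniqueUpToIso_hom, ← Category.assoc,
    show (colimit.cocone (pZ.F ⋙ yoneda)).ι.app k.j =
      colimit.ι (pZ.F ⋙ yoneda) ((Gadget.proj pW pZ f).obj k) from rfl,
    Functor.Final.ι_colimitIso_inv (Gadget.proj pW pZ f) (pZ.F ⋙ yoneda) k, ι_colimMap]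
  rfl

lemma fg_eq : f ≫ gmap pW pZ f = f ≫ zmap pW pZ f := by
  apply pW.coconeIsColimit.hom_ext
  intro i
  obtain ⟨k, rfl⟩ := Gadget.exists_gadget pW pZ f i
  refine ((reassoc_of% k.comm) (gmap pW pZ f)).symm.trans ?_
  refine Eq.trans ?_ ((reassoc_of% k.comm) (zmap pW pZ f))
  rw [ι_gmap, ι_zmap]
  erw [← Category.assoc, ← Category.assoc, ← Functor.map_comp, ← Functor.map_comp,
    cokernel.condition, comp_zero]

/-- An ind-object quotient of ind-objects is locally split by an epimorphism in `A`. -/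
lemma exists_factor_of_epi {W Z : ObjectProperty.FullSubcategory (IsIndObject (C := A))} (g : W ⟶ Z) [Epi g]
    (a : A) (x : yoneda.obj a ⟶ Z.obj) :
    ∃ (b : A) (π : b ⟶ a) (_ : Epi π) (w : yoneda.obj b ⟶ W.obj),
      w ≫ (ObjectProperty.ι _).map g = yoneda.map π ≫ x := by
  let pW := W.2.presentation
  let pZ := Z.2.presentation
  let f : W.obj ⟶ Z.obj := (ObjectProperty.ι _).map g
  show ∃ (b : A) (π : b ⟶ a) (_ : Epi π) (w : yoneda.obj b ⟶ W.obj), w ≫ f = yoneda.map π ≫ x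
  -- the quotient test object
  have hV : IsIndObject (colimit (cokerF pW pZ f ⋙ yoneda)) :=
    isIndObject_colimit _ _ (fun k => isIndObject_yoneda _)
  let VD : ObjectProperty.FullSubcategory (IsIndObject (C := A)) := ⟨_, hV⟩
  let gD : Z ⟶ VD := ObjectProperty.homMk (gmap pW pZ f)
  let zD : Z ⟶ VD := ObjectProperty.homMk (zmap pW pZ f)
  have hcomp : g ≫ gD = g ≫ zD := ObjectProperty.hom_ext _ (fg_eq pW pZ f)
  have hgz : gmap pW pZ f = zmap pW pZ f := by
    have : gD = zD := by rwa [cancel_epi g] at hcomp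
    exact congrArg (fun t => t.hom) this
  -- represent x
  obtain ⟨j, e, he⟩ := exists_rep pZ.coconeIsColimit x
  obtain ⟨k₀⟩ : Nonempty (Gadget pW pZ f) := inferInstance
  let k : Gadget pW pZ f := k₀.push (IsFiltered.rightToMax j k₀.j)
  let e₁ : a ⟶ pZ.F.obj k.j := e ≫ pZ.F.map (IsFiltered.leftToMax j k₀.j)
  have hx : x = yoneda.map e₁ ≫ pZ.cocone.ι.app k.j := by
    rw [he, ← cocone_nat pZ.cocone e (IsFiltered.leftToMax j k₀.j)]
    rfl
  -- the image of x in the quotient is zero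
  have hVeq : yoneda.map (e₁ ≫ cokernel.π k.φ) ≫ colimit.ι (cokerF pW pZ f ⋙ yoneda) k =
      yoneda.map (0 : a ⟶ cokernel k.φ) ≫ colimit.ι (cokerF pW pZ f ⋙ yoneda) k := by
    calc yoneda.map (e₁ ≫ cokernel.π k.φ) ≫ colimit.ι (cokerF pW pZ f ⋙ yoneda) k
        = yoneda.map e₁ ≫ (pZ.cocone.ι.app k.j ≫ gmap pW pZ f) := by
          erw [ι_gmap, Functor.map_comp, Category.assoc]
      _ = yoneda.map e₁ ≫ (pZ.cocone.ι.app k.j ≫ zmap pW pZ f) := by rw [hgz]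
      _ = yoneda.map e₁ ≫ (yoneda.map (0 : pZ.F.obj k.j ⟶ cokernel k.φ) ≫
            colimit.ι (cokerF pW pZ f ⋙ yoneda) k) := by rw [ι_zmap]
      _ = yoneda.map (0 : a ⟶ cokernel k.φ) ≫ colimit.ι (cokerF pW pZ f ⋙ yoneda) k := by
          erw [← Category.assoc, ← Functor.map_comp, comp_zero]
  obtain ⟨k'', s, s', hss⟩ := rep_eq (colimit.isColimit (cokerF pW pZ f ⋙ yoneda))
    (e₁ ≫ cokernel.π k.φ) (0 : a ⟶ cokernel k.φ) hVeq
  erw [zero_comp] at hss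
  have hzero : (e₁ ≫ pZ.F.map s.gj) ≫ cokernel.π k''.φ = 0 := by
    have h2 : (e₁ ≫ cokernel.π k.φ) ≫ (cokerF pW pZ f).map s = 0 := hss
    exact ((Category.assoc _ _ _).trans ((congrArg (e₁ ≫ ·) (cokernel.π_desc _ _ _).symm).trans
      (Category.assoc _ _ _).symm)).trans h2
  -- now use abelian image factorization and pullback
  have hzι : (kernel.lift (cokernel.π k''.φ) (e₁ ≫ pZ.F.map s.gj) hzero) ≫
      Abelian.image.ι k''.φ = e₁ ≫ pZ.F.map s.gj := kernel.lift_ι _ _ _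
  refine ⟨pullback (Abelian.factorThruImage k''.φ)
      (kernel.lift (cokernel.π k''.φ) (e₁ ≫ pZ.F.map s.gj) hzero),
    pullback.snd _ _, inferInstance,
    yoneda.map (pullback.fst (Abelian.factorThruImage k''.φ)
      (kernel.lift (cokernel.π k''.φ) (e₁ ≫ pZ.F.map s.gj) hzero)) ≫
      pW.cocone.ι.app k''.i, ?_⟩
  have h1 := congrArg (fun t => t ≫ Abelian.image.ι k''.φ)
    (pullback.condition (f := Abelian.factorThruImage k''.φ)
      (g := kernel.lift (cokernel.π k''.φ) (e₁ ≫ pZ.F.map s.gj) hzero))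
  simp only [Category.assoc] at h1
  rw [Abelian.image.fac] at h1
  rw [hzι] at h1
  have hx2 : x = yoneda.map (e₁ ≫ pZ.F.map s.gj) ≫ pZ.cocone.ι.app k''.j := by
    rw [cocone_nat pZ.cocone e₁ s.gj, ← hx]
  refine (Category.assoc _ _ _).trans ?_
  erw [← k''.comm]
  rw [hx2]
  exact (yoneda.map_comp_assoc _ _ _).symm.trans
    ((congrArg (fun t => yoneda.map t ≫ pZ.cocone.ι.app k''.j) h1).trans (yoneda.map_comp_assoc _ _ _))

end Main

/-- Part 1: the Yoneda embedding sends projectives to projectives of the Ind-category. -/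
lemma projective_lift (P : A) (hP : Projective P) :
    Projective ((ObjectProperty.lift (IsIndObject (C := A)) yoneda isIndObject_yoneda).obj P) := by
  haveI := hP
  constructor
  intro E X gg e he
  haveI : Epi e := he
  obtain ⟨b, π, hπ, w, hw⟩ := exists_factor_of_epi e P
    (gg.hom : yoneda.obj P ⟶ X.obj)
  haveI := hπ
  refine ⟨ObjectProperty.homMk (yoneda.map (Projective.factorThru (𝟙 P) π) ≫ w :
    yoneda.obj P ⟶ E.obj), ?_⟩
  have : (yoneda.map (Projective.factorThru (𝟙 P) π) ≫ w) ≫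
      (ObjectProperty.ι (IsIndObject (C := A))).map e = (gg.hom : yoneda.obj P ⟶ X.obj) := by
    rw [Category.assoc, hw, ← Functor.map_comp_assoc, Projective.factorThru_comp,
      CategoryTheory.Functor.map_id, Category.id_comp]
  exact ObjectProperty.hom_ext _ this

/-- Part 2: enough projectives. -/
lemma exists_projective_epi [EnoughProjectives A] (X : ObjectProperty.FullSubcategory (IsIndObject (C := A))) :
    ∃ (P : ObjectProperty.FullSubcategory (IsIndObject (C := A))) (f : P ⟶ X), Projective P ∧ Epi f := by
  let p := X.property.presentation
  haveI : HasCoproducts.{u} (Ind A) := inferInstance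
  haveI : HasColimitsOfShape (Discrete p.I) (ObjectProperty.FullSubcategory (IsIndObject (C := A))) :=
    Adjunction.hasColimitsOfShape_of_equivalence (Ind.equivalence A).inverse
  let Y := ObjectProperty.lift (IsIndObject (C := A)) yoneda isIndObject_yoneda
  let Pel : p.I → ObjectProperty.FullSubcategory (IsIndObject (C := A)) :=
    fun i => Y.obj (Projective.over (p.F.obj i))
  haveI hPel : ∀ i, Projective (Pel i) :=
    fun i => projective_lift _ (Projective.projective_over _)
  let ci : ∀ i, Y.obj (p.F.obj i) ⟶ X := fun i => ObjectProperty.homMk (p.cocone.ι.app i)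
  refine ⟨∐ Pel, Sigma.desc (fun i => Y.map (Projective.π (p.F.obj i)) ≫ ci i),
    inferInstance, ?_⟩
  apply epi_of_criterion
  intro a x
  obtain ⟨i, u, hu⟩ := exists_rep p.coconeIsColimit x
  have hD : (Y.map (Projective.factorThru (Projective.π a ≫ u) (Projective.π (p.F.obj i))) ≫
        Sigma.ι Pel i) ≫ Sigma.desc (fun i => Y.map (Projective.π (p.F.obj i)) ≫ ci i) =
      Y.map (Projective.π a) ≫ (Y.map u ≫ ci i) := by
    rw [Category.assoc, Sigma.ι_desc, ← Functor.map_comp_assoc, Projective.factorThru_comp,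
      Functor.map_comp_assoc]
  have hD' := congrArg (ObjectProperty.ι (IsIndObject (C := A))).map hD
  rw [Functor.map_comp] at hD'
  refine ⟨Projective.over a, Projective.π a, inferInstance,
    (ObjectProperty.ι (IsIndObject (C := A))).map
      (Y.map (Projective.factorThru (Projective.π a ≫ u) (Projective.π (p.F.obj i))) ≫
        Sigma.ι Pel i), ?_⟩
  rw [hu]
  exact hD'

end IndProjAux

open CategoryTheory Limits

/-- Let `A` be a small abelian category with enough projectives.  Then the canonical (Yoneda)
embedding of `A` into its Ind-completion `Ind(A)` carries projective objects of `A` to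
projective objects of `Ind(A)`, and `Ind(A)` has enough projectives: every object of `Ind(A)`
admits an epimorphism from a projective object. -/
theorem ind_of_abelian_enough_projectives
    (A : Type u) [SmallCategory A] [Abelian A] [EnoughProjectives A] :
    (∀ P : A, Projective P →
      Projective ((ObjectProperty.lift (IsIndObject (C := A)) yoneda isIndObject_yoneda).obj P)) ∧
    ∀ X : ObjectProperty.FullSubcategory (IsIndObject (C := A)),
      ∃ (P : ObjectProperty.FullSubcategory (IsIndObject (C := A))) (f : P ⟶ X), Projective P ∧ Epi f := by
  exact ⟨fun P hP => IndProjAux.projective_lift P hP,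
    fun X => IndProjAux.exists_projective_epi X⟩
end

section
/- Let A be an abelian category, let P be a chain complex in A such that each P_n is projective and P_n = 0 for all sufficiently small n, and let f: Q \to Q' be a quasi-isomorphism of chain complexes in A. Then composition with f induces a bijection [P, Q] \to [P, Q'] on sets of chain homotopy classes of chain maps. -/
open CategoryTheory Limits HomologicalComplex

universe v u

section Rec

variable {B : ℤ → Type*}

/-- One step of the recursive construction: if possible, extend the family at degree `m`. -/
noncomputable def FLstepFun (R : ∀ n : ℤ, B (n-1) → B n → Prop) (m : ℤ)
    (gf : ∀ n, B n) : ∀ n, B n := by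
  classical
  exact if hm : ∃ b', R m (gf (m-1)) b' then
    (fun n => if h : n = m then cast (congrArg B h.symm) hm.choose else gf n)
  else gf

lemma FLstepFun_of_ne (R : ∀ n : ℤ, B (n-1) → B n → Prop) (m : ℤ)
    (gf : ∀ n, B n) {n : ℤ} (h : n ≠ m) : FLstepFun R m gf n = gf n := by
  unfold FLstepFun
  split_ifs with h1
  · exact dif_neg h
  · rfl

lemma FLstepFun_spec (R : ∀ n : ℤ, B (n-1) → B n → Prop) (m : ℤ)
    (gf : ∀ n, B n) (hm : ∃ b', R m (gf (m-1)) b') :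
    R m (FLstepFun R m gf (m-1)) (FLstepFun R m gf m) := by
  have h1 : FLstepFun R m gf (m-1) = gf (m-1) := FLstepFun_of_ne _ _ _ (by omega)
  have h2 : FLstepFun R m gf m = hm.choose := by
    unfold FLstepFun
    rw [dif_pos hm, dif_pos rfl]
    rfl
  rw [h1, h2]
  exact hm.choose_spec

/-- The stages of the recursive construction. -/
noncomputable def FLfamAux (R : ∀ n : ℤ, B (n-1) → B n → Prop) (z : ∀ n, B n) (N : ℤ) :
    ℕ → ∀ n, B n
  | 0 => z
  | (k+1) => FLstepFun R (N + k + 1) (FLfamAux R z N k)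

lemma FL_exists_family (R : ∀ n : ℤ, B (n-1) → B n → Prop)
    (z : ∀ n, B n) (N : ℤ) (hz : ∀ n ≤ N, R n (z (n-1)) (z n))
    (hstep : ∀ n : ℤ, ∀ b : B (n-1), (∃ b0, R (n-1) b0 b) → ∃ b', R n b b') :
    ∃ g : ∀ n, B n, ∀ n, R n (g (n-1)) (g n) := by
  set F := FLfamAux R z N with hFdef
  have hFsucc : ∀ k : ℕ, F (k+1) = FLstepFun R (N + k + 1) (F k) := fun k => rfl
  have Inv : ∀ k : ℕ, (∀ n ≤ N + k, R n (F k (n-1)) (F k n)) ∧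
      (∀ n, N + k < n → F k n = z n) := by
    intro k
    induction k with
    | zero =>
      refine ⟨fun n hn => hz n (by omega), fun n _ => rfl⟩
    | succ k ih =>
      have hm : ∃ b', R (N + k + 1) (F k (N + k + 1 - 1)) b' := by
        refine hstep (N + k + 1) (F k (N + k + 1 - 1))
          ⟨F k (N + k + 1 - 1 - 1), ih.1 (N + k + 1 - 1) (by omega)⟩
      constructor
      · intro n hn
        by_cases h : n = N + k + 1
        · subst h
          rw [hFsucc]
          exact FLstepFun_spec R _ _ hm
        · rw [hFsucc, FLstepFun_of_ne _ _ _ h, FLstepFun_of_ne _ _ _ (by omega)]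
          exact ih.1 n (by omega)
      · intro n hn
        rw [hFsucc, FLstepFun_of_ne _ _ _ (by omega)]
        exact ih.2 n (by omega)
  have agree : ∀ (k j : ℕ), ∀ n ≤ N + k, F (k + j) n = F k n := by
    intro k j
    induction j with
    | zero => intro n _; rfl
    | succ j ih =>
      intro n hn
      have : F (k + (j+1)) = FLstepFun R (N + (k + j) + 1) (F (k + j)) := hFsucc (k + j)
      rw [this, FLstepFun_of_ne _ _ _ (by omega), ih n hn]
  refine ⟨fun n => F ((n - N).toNat) n, fun n => ?_⟩
  have hk : n ≤ N + ((n - N).toNat : ℤ) := by omega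
  have hk' : (n - 1) ≤ N + (((n - 1) - N).toNat : ℤ) := by omega
  obtain ⟨j, hj⟩ : ∃ j : ℕ, (n - N).toNat = ((n - 1) - N).toNat + j :=
    ⟨(n - N).toNat - ((n - 1) - N).toNat, by omega⟩
  have h2 : F ((n - 1 - N).toNat) (n-1) = F ((n - N).toNat) (n-1) := by
    rw [hj]
    exact (agree _ _ _ hk').symm
  show R n (F (n - 1 - N).toNat (n - 1)) (F (n - N).toNat n)
  rw [h2]
  exact (Inv ((n - N).toNat)).1 n hk

end Rec

section Helpers

variable {A : Type u} [Category.{v} A] [Abelian A]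

lemma FL_comp_d_congr {K : HomologicalComplex A (ComplexShape.down ℤ)} {X : A}
    {i m m' : ℤ} (h : m = m') (x : X ⟶ K.X i) (hx : x ≫ K.d i m = 0) :
    x ≫ K.d i m' = 0 := by subst h; exact hx

lemma FL_xiso_f_comm {Q Q' : HomologicalComplex A (ComplexShape.down ℤ)} (f : Q ⟶ Q')
    {i j : ℤ} (h : i = j) :
    (Q.XIsoOfEq h).hom ≫ f.f j = f.f i ≫ (Q'.XIsoOfEq h).hom := by
  subst h; simp

lemma FL_hom_congr {C D : HomologicalComplex A (ComplexShape.down ℤ)} {φ ψ : C ⟶ D}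
    (H : Homotopy φ ψ) (i : ℤ) {j j' : ℤ} (h : j = j') :
    H.hom i j' = H.hom i j ≫ (D.XIsoOfEq h).hom := by
  subst h; simp

/-- If a cycle has zero homology class and the source is projective, it is a boundary. -/
lemma FL_exists_of_class_zero (K : HomologicalComplex A (ComplexShape.down ℤ))
    {i j : ℤ} (hij : i = j + 1) {X : A} [Projective X]
    (x : X ⟶ K.X j) (hx : x ≫ K.d j (j-1) = 0)
    (hcls : K.liftCycles x (j-1) (ChainComplex.next ℤ j) hx ≫ K.homologyπ j = 0) :
    ∃ y : X ⟶ K.X i, y ≫ K.d i j = x := by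
  subst hij
  set S := ShortComplex.mk (K.toCycles (j+1) j) (K.homologyπ j)
    (K.toCycles_comp_homologyπ _ _) with hS_def
  have hS : S.Exact := S.exact_of_g_is_cokernel
    (K.homologyIsCokernel _ _ (ChainComplex.prev ℤ j))
  refine ⟨hS.liftFromProjective (K.liftCycles x (j-1) (ChainComplex.next ℤ j) hx) hcls, ?_⟩
  have h1 := hS.liftFromProjective_comp
    (K.liftCycles x (j-1) (ChainComplex.next ℤ j) hx) hcls
  calc hS.liftFromProjective _ hcls ≫ K.d (j+1) j
      = hS.liftFromProjective _ hcls ≫ K.toCycles (j+1) j ≫ K.iCycles j := by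
        rw [K.toCycles_i]
    _ = (hS.liftFromProjective _ hcls ≫ S.f) ≫ K.iCycles j := by
        rw [Category.assoc]
    _ = x := by rw [h1, K.liftCycles_i]

/-- Lifting through a quasi-isomorphism: if `x` is a cycle whose image under `f`
is a boundary, then `x` is a boundary. -/
lemma FL_exists_lift_of_comp_boundary {Q Q' : HomologicalComplex A (ComplexShape.down ℤ)}
    (f : Q ⟶ Q') (hf : QuasiIso f) {i j : ℤ} (hij : i = j + 1) {X : A} [Projective X]
    (x : X ⟶ Q.X j) (hx : x ≫ Q.d j (j-1) = 0)
    (w : X ⟶ Q'.X i) (hw : x ≫ f.f j = w ≫ Q'.d i j) :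
    ∃ y : X ⟶ Q.X i, y ≫ Q.d i j = x := by
  subst hij
  apply FL_exists_of_class_zero Q rfl x hx
  haveI : QuasiIsoAt f j := hf.quasiIsoAt j
  have hiso : IsIso (homologyMap f j) := (quasiIsoAt_iff_isIso_homologyMap f j).1 inferInstance
  rw [← cancel_mono (homologyMap f j), zero_comp, Category.assoc, homologyπ_naturality,
    ← Category.assoc, liftCycles_comp_cyclesMap]
  exact Q'.liftCycles_homologyπ_eq_zero_of_boundary (x ≫ f.f j) (j-1)
    (ChainComplex.next ℤ j) w hw

/-- Surjectivity on cycles up to boundaries, through a quasi-isomorphism. -/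
lemma FL_exists_cycle_preimage {Q Q' : HomologicalComplex A (ComplexShape.down ℤ)}
    (f : Q ⟶ Q') (hf : QuasiIso f) {i j : ℤ} (hij : i = j + 1) {X : A} [Projective X]
    (c : X ⟶ Q'.X j) (hc : c ≫ Q'.d j (j-1) = 0) :
    ∃ (z : X ⟶ Q.X j) (w : X ⟶ Q'.X i),
      z ≫ Q.d j (j-1) = 0 ∧ z ≫ f.f j = c + w ≫ Q'.d i j := by
  subst hij
  haveI : QuasiIsoAt f j := hf.quasiIsoAt j
  haveI hiso : IsIso (homologyMap f j) := (quasiIsoAt_iff_isIso_homologyMap f j).1 inferInstance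
  set γ : X ⟶ Q.homology j :=
    Q'.liftCycles c (j-1) (ChainComplex.next ℤ j) hc ≫ Q'.homologyπ j ≫
      inv (homologyMap f j) with hγ
  set u : X ⟶ Q.cycles j := Projective.factorThru γ (Q.homologyπ j) with hu_def
  have hu : u ≫ Q.homologyπ j = γ := Projective.factorThru_comp _ _
  set z : X ⟶ Q.X j := u ≫ Q.iCycles j with hz_def
  have hz : z ≫ Q.d j (j-1) = 0 := by rw [hz_def, Category.assoc, Q.iCycles_d, comp_zero]
  have hδ : (z ≫ f.f j - c) ≫ Q'.d j (j-1) = 0 := by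
    rw [Preadditive.sub_comp, Category.assoc, f.comm j (j-1), ← Category.assoc, hz,
      zero_comp, hc, sub_zero]
  have hliftz : Q'.liftCycles (z ≫ f.f j) (j-1) (ChainComplex.next ℤ j)
      (by rw [Category.assoc, f.comm j (j-1), ← Category.assoc, hz, zero_comp])
      = u ≫ cyclesMap f j := by
    rw [← cancel_mono (Q'.iCycles j)]
    simp [hz_def]
  have hcls : Q'.liftCycles (z ≫ f.f j - c) (j-1) (ChainComplex.next ℤ j) hδ ≫
      Q'.homologyπ j = 0 := by
    have hsplit : Q'.liftCycles (z ≫ f.f j - c) (j-1) (ChainComplex.next ℤ j) hδ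
        = Q'.liftCycles (z ≫ f.f j) (j-1) (ChainComplex.next ℤ j)
            (by rw [Category.assoc, f.comm j (j-1), ← Category.assoc, hz, zero_comp])
          - Q'.liftCycles c (j-1) (ChainComplex.next ℤ j) hc := by
      rw [← cancel_mono (Q'.iCycles j), liftCycles_i, Preadditive.sub_comp,
        liftCycles_i, liftCycles_i]
    rw [hsplit, Preadditive.sub_comp, hliftz, Category.assoc, ← homologyπ_naturality,
      ← Category.assoc, hu, hγ]
    simp
  obtain ⟨w, hw⟩ := FL_exists_of_class_zero Q' rfl (z ≫ f.f j - c) hδ hcls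
  exact ⟨z, w, hz, by rw [hw]; abel⟩

end Helpers

section Main

variable {A : Type u} [Category.{v} A] [Abelian A]
variable {P Q Q' : HomologicalComplex A (ComplexShape.down ℤ)}

lemma FL_surj (hproj : ∀ n : ℤ, Projective (P.X n)) (N : ℤ)
    (hN : ∀ n < N, IsZero (P.X n))
    (f : Q ⟶ Q') (hf : QuasiIso f) (g' : P ⟶ Q') :
    ∃ g : P ⟶ Q, Nonempty (Homotopy (g ≫ f) g') := by
  set R : ∀ n : ℤ, ((P.X (n-1) ⟶ Q.X (n-1)) × (P.X (n-1) ⟶ Q'.X (n-1+1))) →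
      ((P.X n ⟶ Q.X n) × (P.X n ⟶ Q'.X (n+1))) → Prop := fun n b b' =>
      b'.1 ≫ Q.d n (n-1) = P.d n (n-1) ≫ b.1 ∧
      b'.1 ≫ f.f n = g'.f n +
        P.d n (n-1) ≫ b.2 ≫ (Q'.XIsoOfEq (show n-1+1 = n by omega)).hom +
        b'.2 ≫ Q'.d (n+1) n with hR_def
  have hbase : ∀ n ≤ N - 1, R n (0, 0) (0, 0) := by
    intro n hn
    refine ⟨by simp, ?_⟩
    have h0 : g'.f n = 0 := (hN n (by omega)).eq_of_src _ _
    simp [h0]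
  have hstep : ∀ n : ℤ, ∀ b, (∃ b0, R (n-1) b0 b) → ∃ b', R n b b' := by
    intro n b hb
    obtain ⟨b0, hA1, hA2⟩ := hb
    haveI := hproj n
    -- the cycle k = P.d ≫ b.1
    have hk : (P.d n (n-1) ≫ b.1) ≫ Q.d (n-1) (n-1-1) = 0 := by
      rw [Category.assoc, hA1, ← Category.assoc, P.d_comp_d, zero_comp]
    have hkf : (P.d n (n-1) ≫ b.1) ≫ f.f (n-1)
        = (g'.f n + P.d n (n-1) ≫ b.2 ≫ (Q'.XIsoOfEq (show n-1+1 = n by omega)).hom) ≫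
            Q'.d n (n-1) := by
      rw [Category.assoc, hA2]
      simp only [Preadditive.comp_add, Preadditive.add_comp, Category.assoc]
      rw [← g'.comm n (n-1), ← Category.assoc (P.d n (n-1)), P.d_comp_d, zero_comp,
        Q'.XIsoOfEq_hom_comp_d]
      abel
    obtain ⟨bQ, hbQ⟩ := FL_exists_lift_of_comp_boundary f hf
      (show n = (n-1) + 1 by omega) _ hk _ hkf
    set r0 : P.X n ⟶ Q'.X n := bQ ≫ f.f n - g'.f n -
      P.d n (n-1) ≫ b.2 ≫ (Q'.XIsoOfEq (show n-1+1 = n by omega)).hom with hr0_def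
    have hr0 : r0 ≫ Q'.d n (n-1) = 0 := by
      rw [hr0_def]
      simp only [Preadditive.sub_comp]
      rw [Category.assoc, f.comm n (n-1), ← Category.assoc, hbQ, hkf]
      simp only [Preadditive.add_comp]
      abel
    obtain ⟨z, w, hz, hw⟩ := FL_exists_cycle_preimage f hf (rfl : n + 1 = n + 1)
      (-r0) (by rw [Preadditive.neg_comp, hr0, neg_zero])
    refine ⟨(bQ + z, w), ?_, ?_⟩
    · show (bQ + z) ≫ Q.d n (n-1) = P.d n (n-1) ≫ b.1
      rw [Preadditive.add_comp, hbQ, hz, add_zero]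
    · show (bQ + z) ≫ f.f n = g'.f n +
        P.d n (n-1) ≫ b.2 ≫ (Q'.XIsoOfEq (show n-1+1 = n by omega)).hom +
        w ≫ Q'.d (n+1) n
      rw [Preadditive.add_comp, hw, hr0_def]
      abel
  obtain ⟨G, hG⟩ := FL_exists_family (B := fun n => (P.X n ⟶ Q.X n) × (P.X n ⟶ Q'.X (n+1)))
    R (fun _ => (0, 0)) (N - 1) hbase hstep
  simp only [hR_def] at hG
  -- assemble the chain map and homotopy
  refine ⟨{ f := fun n => (G n).1, comm' := ?_ }, ⟨?_⟩⟩
  · intro i j hij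
    rw [ComplexShape.down_Rel] at hij
    obtain rfl : j = i - 1 := by omega
    exact (hG i).1
  · refine
      { hom := fun i j => if h : i + 1 = j then (G i).2 ≫ (Q'.XIsoOfEq h).hom else 0
        zero := ?_
        comm := ?_ }
    · intro i j hn
      rw [ComplexShape.down_Rel] at hn
      exact dif_neg hn
    · intro i
      have hd : dNext i (fun i j => if h : i + 1 = j then (G i).2 ≫ (Q'.XIsoOfEq h).hom else 0)
          = P.d i (i-1) ≫ (G (i-1)).2 ≫ (Q'.XIsoOfEq (show i-1+1 = i by omega)).hom := by
        rw [dNext_eq _ (show (ComplexShape.down ℤ).Rel i (i-1) by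
          simp only [ComplexShape.down_Rel]; omega)]
        congr 1
        exact dif_pos (show i - 1 + 1 = i by omega)
      have hp : prevD i (fun i j => if h : i + 1 = j then (G i).2 ≫ (Q'.XIsoOfEq h).hom else 0)
          = (G i).2 ≫ Q'.d (i+1) i := by
        rw [prevD_eq _ (show (ComplexShape.down ℤ).Rel (i+1) i by
          simp only [ComplexShape.down_Rel])]
        congr 1
        rw [dif_pos rfl]
        simp
      rw [hd, hp]
      show (G i).1 ≫ f.f i = _
      rw [(hG i).2]
      abel


lemma FL_inj (hproj : ∀ n : ℤ, Projective (P.X n)) (N : ℤ)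
    (hN : ∀ n < N, IsZero (P.X n))
    (f : Q ⟶ Q') (hf : QuasiIso f) (g : P ⟶ Q)
    (H : Homotopy (g ≫ f) 0) : Nonempty (Homotopy g (0 : P ⟶ Q)) := by
  have E : ∀ n : ℤ, g.f n ≫ f.f n =
      P.d n (n-1) ≫ H.hom (n-1) n + H.hom n (n+1) ≫ Q'.d (n+1) n := by
    intro n
    have hc := H.comm n
    rw [dNext_eq _ (show (ComplexShape.down ℤ).Rel n (n-1) by
        simp only [ComplexShape.down_Rel]; omega),
      prevD_eq _ (show (ComplexShape.down ℤ).Rel (n+1) n by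
        simp only [ComplexShape.down_Rel])] at hc
    simpa using hc
  set R : ∀ n : ℤ, ((P.X (n-1) ⟶ Q.X (n-1+1)) × (P.X (n-1) ⟶ Q'.X (n-1+2))) →
      ((P.X n ⟶ Q.X (n+1)) × (P.X n ⟶ Q'.X (n+2))) → Prop := fun n b b' =>
      g.f n = P.d n (n-1) ≫ b.1 ≫ (Q.XIsoOfEq (show n-1+1 = n by omega)).hom +
        b'.1 ≫ Q.d (n+1) n ∧
      H.hom n (n+1) = P.d n (n-1) ≫ b.2 ≫ (Q'.XIsoOfEq (show n-1+2 = n+1 by omega)).hom +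
        b'.1 ≫ f.f (n+1) - b'.2 ≫ Q'.d (n+2) (n+1) with hR_def
  have hbase : ∀ n ≤ N - 1, R n (0, 0) (0, 0) := by
    intro n hn
    exact ⟨(hN n (by omega)).eq_of_src _ _, (hN n (by omega)).eq_of_src _ _⟩
  have hstep : ∀ n : ℤ, ∀ b, (∃ b0, R (n-1) b0 b) → ∃ b', R n b b' := by
    intro n b hb
    obtain ⟨b0, hA1, hA2⟩ := hb
    haveI := hproj n
    set eQ := (Q.XIsoOfEq (show n-1+1 = n by omega)).hom with heQ
    set eQ' := (Q'.XIsoOfEq (show n-1+2 = n+1 by omega)).hom with heQ'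
    set a : P.X n ⟶ Q.X n := g.f n - P.d n (n-1) ≫ b.1 ≫ eQ with ha_def
    have ha : a ≫ Q.d n (n-1) = 0 := by
      have h1 : g.f n ≫ Q.d n (n-1) = P.d n (n-1) ≫ b.1 ≫ Q.d (n-1+1) (n-1) := by
        rw [g.comm n (n-1), hA1]
        simp only [Preadditive.comp_add]
        rw [← Category.assoc (P.d n (n-1)), P.d_comp_d, zero_comp, zero_add]
      rw [ha_def, Preadditive.sub_comp, h1]
      simp only [Category.assoc]
      rw [heQ, Q.XIsoOfEq_hom_comp_d, sub_self]
    have h2 : P.d n (n-1) ≫ b.1 ≫ f.f (n-1+1)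
        = P.d n (n-1) ≫ H.hom (n-1) (n-1+1)
          + P.d n (n-1) ≫ b.2 ≫ Q'.d (n-1+2) (n-1+1) := by
      have h2' : b.1 ≫ f.f (n-1+1) = H.hom (n-1) (n-1+1)
          - P.d (n-1) (n-1-1) ≫ b0.2 ≫ (Q'.XIsoOfEq (show n-1-1+2 = n-1+1 by omega)).hom
          + b.2 ≫ Q'.d (n-1+2) (n-1+1) := by
        rw [hA2]; abel
      rw [h2']
      simp only [Preadditive.comp_add, Preadditive.comp_sub]
      rw [← Category.assoc (P.d n (n-1)) (P.d (n-1) (n-1-1)), P.d_comp_d, zero_comp,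
        sub_zero]
    have hx1 : P.d n (n-1) ≫ b.1 ≫ eQ ≫ f.f n
        = P.d n (n-1) ≫ H.hom (n-1) n + P.d n (n-1) ≫ b.2 ≫ eQ' ≫ Q'.d (n+1) n := by
      rw [heQ, FL_xiso_f_comm f (show n-1+1 = n by omega)]
      calc P.d n (n-1) ≫ b.1 ≫ f.f (n-1+1) ≫ (Q'.XIsoOfEq (show n-1+1 = n by omega)).hom
          = (P.d n (n-1) ≫ b.1 ≫ f.f (n-1+1)) ≫
              (Q'.XIsoOfEq (show n-1+1 = n by omega)).hom := by
            simp only [Category.assoc]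
        _ = (P.d n (n-1) ≫ H.hom (n-1) (n-1+1)
              + P.d n (n-1) ≫ b.2 ≫ Q'.d (n-1+2) (n-1+1)) ≫
              (Q'.XIsoOfEq (show n-1+1 = n by omega)).hom := by rw [h2]
        _ = P.d n (n-1) ≫ H.hom (n-1) n + P.d n (n-1) ≫ b.2 ≫ eQ' ≫ Q'.d (n+1) n := by
            rw [Preadditive.add_comp]
            simp only [Category.assoc]
            rw [Q'.d_comp_XIsoOfEq_hom, ← FL_hom_congr H (n-1) (show n-1+1 = n by omega),
              ← Q'.XIsoOfEq_hom_comp_d (show n-1+2 = n+1 by omega) n, ← heQ']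
    have haf : a ≫ f.f n = (H.hom n (n+1) - P.d n (n-1) ≫ b.2 ≫ eQ') ≫ Q'.d (n+1) n := by
      rw [ha_def, Preadditive.sub_comp, E n]
      simp only [Category.assoc]
      rw [hx1]
      simp only [Preadditive.sub_comp, Category.assoc]
      abel
    obtain ⟨bb, hbb⟩ := FL_exists_lift_of_comp_boundary f hf (rfl : n + 1 = n + 1)
      a ha _ haf
    set r0 : P.X n ⟶ Q'.X (n+1) :=
      H.hom n (n+1) - P.d n (n-1) ≫ b.2 ≫ eQ' - bb ≫ f.f (n+1) with hr0_def
    have hr0 : r0 ≫ Q'.d (n+1) n = 0 := by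
      rw [hr0_def, Preadditive.sub_comp, Category.assoc, f.comm (n+1) n,
        ← Category.assoc bb, hbb, haf]
      simp only [Category.assoc, sub_self]
    obtain ⟨zz, ww, hzz, hww⟩ := FL_exists_cycle_preimage f hf
      (show n+2 = (n+1) + 1 by omega) r0 (FL_comp_d_congr (show n = n+1-1 by omega) r0 hr0)
    have hzz' : zz ≫ Q.d (n+1) n = 0 := FL_comp_d_congr (show n+1-1 = n by omega) zz hzz
    refine ⟨(bb + zz, ww), ?_, ?_⟩
    · show g.f n = P.d n (n-1) ≫ b.1 ≫ eQ + (bb + zz) ≫ Q.d (n+1) n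
      rw [Preadditive.add_comp, hbb, hzz', add_zero, ha_def]
      abel
    · show H.hom n (n+1) = P.d n (n-1) ≫ b.2 ≫ eQ' + (bb + zz) ≫ f.f (n+1)
        - ww ≫ Q'.d (n+2) (n+1)
      rw [Preadditive.add_comp, hww, hr0_def]
      abel
  obtain ⟨G, hG⟩ := FL_exists_family
    (B := fun n => (P.X n ⟶ Q.X (n+1)) × (P.X n ⟶ Q'.X (n+2)))
    R (fun _ => (0, 0)) (N - 1) hbase hstep
  simp only [hR_def] at hG
  refine ⟨{ hom := fun i j => if h : i + 1 = j then (G i).1 ≫ (Q.XIsoOfEq h).hom else 0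
            zero := ?_
            comm := ?_ }⟩
  · intro i j hn
    rw [ComplexShape.down_Rel] at hn
    exact dif_neg hn
  · intro i
    have hd : dNext i (fun i j => if h : i + 1 = j then (G i).1 ≫ (Q.XIsoOfEq h).hom else 0)
        = P.d i (i-1) ≫ (G (i-1)).1 ≫ (Q.XIsoOfEq (show i-1+1 = i by omega)).hom := by
      rw [dNext_eq _ (show (ComplexShape.down ℤ).Rel i (i-1) by
        simp only [ComplexShape.down_Rel]; omega)]
      congr 1
      exact dif_pos (show i - 1 + 1 = i by omega)
    have hp : prevD i (fun i j => if h : i + 1 = j then (G i).1 ≫ (Q.XIsoOfEq h).hom else 0)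
        = (G i).1 ≫ Q.d (i+1) i := by
      rw [prevD_eq _ (show (ComplexShape.down ℤ).Rel (i+1) i by
        simp only [ComplexShape.down_Rel])]
      congr 1
      rw [dif_pos rfl]
      simp
    rw [hd, hp, (hG i).1]
    simp

end Main


/-- Let `A` be an abelian category, `P` a chain complex in `A` (homologically indexed over `ℤ`)
such that each `P_n` is projective and `P_n = 0` for all sufficiently small `n`, and let
`f : Q ⟶ Q'` be a quasi-isomorphism of chain complexes in `A`.  Then composition with `f`
induces a bijection `[P, Q] → [P, Q']` on chain homotopy classes of chain maps. -/
theorem homotopyClasses_comp_quasiIso_bijective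
    {A : Type u} [Category.{v} A] [Abelian A]
    (P Q Q' : HomologicalComplex A (ComplexShape.down ℤ))
    (hproj : ∀ n : ℤ, Projective (P.X n))
    (hbdd : ∃ N : ℤ, ∀ n < N, IsZero (P.X n))
    (f : Q ⟶ Q') (hf : QuasiIso f) :
    Function.Bijective
      (fun g : (HomotopyCategory.quotient A (ComplexShape.down ℤ)).obj P ⟶
          (HomotopyCategory.quotient A (ComplexShape.down ℤ)).obj Q =>
        g ≫ (HomotopyCategory.quotient A (ComplexShape.down ℤ)).map f) := by
  obtain ⟨N, hN⟩ := hbdd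
  constructor
  · intro u v huv
    obtain ⟨a, rfl⟩ := (HomotopyCategory.quotient A (ComplexShape.down ℤ)).map_surjective u
    obtain ⟨b, rfl⟩ := (HomotopyCategory.quotient A (ComplexShape.down ℤ)).map_surjective v
    simp only [← Functor.map_comp] at huv
    have Hab : Homotopy (a ≫ f) (b ≫ f) := HomotopyCategory.homotopyOfEq _ _ huv
    have Hsub : Homotopy ((a - b) ≫ f) 0 :=
      (Homotopy.ofEq (by rw [Preadditive.sub_comp])).trans (Homotopy.equivSubZero Hab)
    obtain ⟨K⟩ := FL_inj hproj N hN f hf (a - b) Hsub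
    exact HomotopyCategory.eq_of_homotopy _ _ (Homotopy.equivSubZero.symm K)
  · intro u
    obtain ⟨g', rfl⟩ := (HomotopyCategory.quotient A (ComplexShape.down ℤ)).map_surjective u
    obtain ⟨g, ⟨Hg⟩⟩ := FL_surj hproj N hN f hf g'
    refine ⟨(HomotopyCategory.quotient A (ComplexShape.down ℤ)).map g, ?_⟩
    simp only [← Functor.map_comp]
    exact HomotopyCategory.eq_of_homotopy _ _ Hg
end

section
/- Fix an integer n \ge 0 and a subset S of the open interval (0,1) of cardinality at most n. Let Y be the set of all sequences of real numbers 0 \le y_1 \le y_2 \le \dots \le y_n \le 1 such that S \subseteq \{y_1, \dots, y_n\}, regarded as a subspace of \mathbb{R}^n with the subspace topology. Then Y is a contractible topological space. -/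
/-- Piecewise-linear interpolation of the node values `e 0, e 1, …, e (k+1)` at integers. -/
noncomputable def glueFn (k : ℕ) (e : ℕ → ℝ) : ℝ → ℝ :=
  fun x => ∑ m ∈ Finset.range (k + 1), (e (m + 1) - e m) * max 0 (min (x - m) 1)

lemma glueFn_continuous (k : ℕ) (e : ℕ → ℝ) : Continuous (glueFn k e) := by
  unfold glueFn
  apply continuous_finset_sum
  intro m _
  fun_prop

lemma glueFn_mono (k : ℕ) {e : ℕ → ℝ} (he : Monotone e) : Monotone (glueFn k e) := by
  intro x y hxy
  apply Finset.sum_le_sum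
  intro m _
  have h1 : (0:ℝ) ≤ e (m+1) - e m := by have := he (Nat.le_succ m); linarith
  have h2 : max 0 (min (x - (m:ℝ)) 1) ≤ max 0 (min (y - m) 1) := by
    apply max_le_max le_rfl
    exact min_le_min (by linarith) le_rfl
  exact mul_le_mul_of_nonneg_left h2 h1

lemma glueFn_natCast (k : ℕ) (e : ℕ → ℝ) (j : ℕ) (hj : j ≤ k + 1) :
    glueFn k e (j : ℝ) = e j - e 0 := by
  have key : ∀ K : ℕ, ∑ m ∈ Finset.range K, (e (m + 1) - e m) * max 0 (min ((j:ℝ) - m) 1)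
      = e (min j K) - e 0 := by
    intro K
    induction K with
    | zero => simp
    | succ K ih =>
      rw [Finset.sum_range_succ, ih]
      rcases le_or_gt j K with h | h
      · have hc : min ((j:ℝ) - K) 1 ≤ 0 := by
          apply min_le_of_left_le
          have : (j:ℝ) ≤ K := by exact_mod_cast h
          linarith
        have : max 0 (min ((j:ℝ) - K) 1) = 0 := max_eq_left hc
        rw [this, min_eq_left h, min_eq_left (h.trans (Nat.le_succ K))]
        ring
      · have hc : (1:ℝ) ≤ (j:ℝ) - K := by
          have : (K:ℝ) + 1 ≤ j := by exact_mod_cast h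
          linarith
        have : max 0 (min ((j:ℝ) - K) 1) = 1 := by
          rw [min_eq_right hc, max_eq_right zero_le_one]
        rw [this, min_eq_right h.le, min_eq_right h]
        ring
  rw [glueFn, key (k+1), min_eq_left hj]

lemma glueFn_nonneg (k : ℕ) {e : ℕ → ℝ} (he : Monotone e) (x : ℝ) : 0 ≤ glueFn k e x := by
  apply Finset.sum_nonneg
  intro m _
  have h1 : (0:ℝ) ≤ e (m+1) - e m := by have := he (Nat.le_succ m); linarith
  exact mul_nonneg h1 (le_max_left _ _)

lemma glueFn_le (k : ℕ) {e : ℕ → ℝ} (he : Monotone e) (x : ℝ) :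
    glueFn k e x ≤ e (k + 1) - e 0 := by
  have : ∀ K : ℕ, ∑ m ∈ Finset.range K, (e (m + 1) - e m) * max 0 (min (x - m) 1)
      ≤ e K - e 0 := by
    intro K
    induction K with
    | zero => simp
    | succ K ih =>
      rw [Finset.sum_range_succ]
      have h1 : (0:ℝ) ≤ e (K+1) - e K := by have := he (Nat.le_succ K); linarith
      have h2 : max 0 (min (x - (K:ℝ)) 1) ≤ 1 := by
        apply max_le zero_le_one (min_le_right _ _)
      nlinarith [mul_le_mul_of_nonneg_left h2 h1]
  exact this (k+1)

/-- lower bound for strictly monotone maps between `Fin` types -/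
lemma strictMono_fin_le {k n : ℕ} {w : Fin k → Fin n} (hw : StrictMono w) (j : Fin k) :
    (j : ℕ) ≤ (w j : ℕ) := by
  have : ∀ m : ℕ, ∀ j : Fin k, (j : ℕ) = m → m ≤ (w j : ℕ) := by
    intro m
    induction m with
    | zero => intro j _; exact Nat.zero_le _
    | succ m ih =>
      intro j hj
      have hm : m < k := by omega
      have hlt : (⟨m, hm⟩ : Fin k) < j := by
        simp only [Fin.lt_def, hj]; omega
      have := ih ⟨m, hm⟩ rfl
      have := hw hlt
      simp only [Fin.lt_def] at this
      omega
  exact this _ j rfl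

lemma strictMono_fin_ge {k n : ℕ} {w : Fin k → Fin n} (hw : StrictMono w) (j : Fin k) :
    (w j : ℕ) ≤ n - k + j := by
  have hrev : StrictMono (fun j : Fin k => (w j.rev).rev) := by
    intro a b hab
    have : b.rev < a.rev := by simpa [Fin.rev_lt_rev] using hab
    have := hw this
    simpa [Fin.rev_lt_rev] using this
  have := strictMono_fin_le hrev j.rev
  simp only [Fin.rev_rev, Fin.val_rev] at this
  have h1 := (w j).isLt
  have h2 := j.isLt
  omega


/-- The moving "caterpillar" path of monotone sequences. -/
noncomputable def pathP (k d : ℕ) (e : ℕ → ℝ) (u : ℝ) {n : ℕ} (i : Fin n) : ℝ :=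
  glueFn k e (max (min (((i : ℕ) : ℝ) + 1) u) (((i : ℕ) : ℝ) + 1 - d))

lemma pathP_mono {k d n : ℕ} {e : ℕ → ℝ} (he : Monotone e) (u : ℝ) :
    Monotone (fun i : Fin n => pathP k d e u i) := by
  intro a b hab
  apply glueFn_mono k he
  have : ((a : ℕ) : ℝ) ≤ ((b : ℕ) : ℝ) := by exact_mod_cast (Fin.le_def.mp hab)
  exact max_le_max (min_le_min (by linarith) le_rfl) (by linarith)

lemma pathP_mem01 {k d n : ℕ} {e : ℕ → ℝ} (he : Monotone e) (he0 : e 0 = 0)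
    (he1 : e (k + 1) = 1) (u : ℝ) (i : Fin n) : pathP k d e u i ∈ Set.Icc (0 : ℝ) 1 := by
  constructor
  · exact glueFn_nonneg k he _
  · have := glueFn_le k he (max (min (((i : ℕ) : ℝ) + 1) u) (((i : ℕ) : ℝ) + 1 - d))
    rw [he0, he1] at this
    simpa [pathP] using this

lemma pathP_wit {k d n : ℕ} (e : ℕ → ℝ) (he0 : e 0 = 0) (hkd : d + k = n) (u : ℝ) (j : Fin k) :
    ∃ i : Fin n, pathP k d e u i = e ((j : ℕ) + 1) := by
  have hjk : (j : ℕ) < k := j.isLt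
  rcases le_or_gt (((j : ℕ) : ℝ) + 1) u with h | h
  · refine ⟨⟨(j : ℕ), by omega⟩, ?_⟩
    have harg : max (min (((j : ℕ) : ℝ) + 1) u) (((j : ℕ) : ℝ) + 1 - d)
        = ((j : ℕ) : ℝ) + 1 := by
      rw [min_eq_left h]
      apply max_eq_left
      have : (0:ℝ) ≤ (d : ℝ) := by positivity
      linarith
    have hcast : ((j : ℕ) : ℝ) + 1 = (((j : ℕ) + 1 : ℕ) : ℝ) := by push_cast; ring
    simp only [pathP, Fin.val_mk]
    rw [harg, hcast, glueFn_natCast k e _ (by omega), he0]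
    ring
  · refine ⟨⟨d + (j : ℕ), by omega⟩, ?_⟩
    have harg : max (min (((d + (j : ℕ) : ℕ) : ℝ) + 1) u) (((d + (j : ℕ) : ℕ) : ℝ) + 1 - d)
        = ((j : ℕ) : ℝ) + 1 := by
      have h1 : ((d + (j : ℕ) : ℕ) : ℝ) + 1 - d = ((j : ℕ) : ℝ) + 1 := by push_cast; ring
      rw [h1]
      apply max_eq_right
      refine le_trans (min_le_right _ _) h.le
    have hcast : ((j : ℕ) : ℝ) + 1 = (((j : ℕ) + 1 : ℕ) : ℝ) := by push_cast; ring
    simp only [pathP, Fin.val_mk]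
    rw [harg, hcast, glueFn_natCast k e _ (by omega), he0]
    ring

lemma pathP_bot {k d n : ℕ} {e : ℕ → ℝ} (he : Monotone e) (he0 : e 0 = 0) (hkd : d + k = n)
    (y : Fin n → ℝ) (hmono : Monotone y) (hy0 : ∀ i, 0 ≤ y i)
    (hwit : ∀ j : Fin k, ∃ i : Fin n, y i = e ((j : ℕ) + 1) ∧ (i : ℕ) ≤ d + (j : ℕ))
    (i : Fin n) : pathP k d e 0 i ≤ y i := by
  have hmin : min (((i : ℕ) : ℝ) + 1) 0 = 0 := by
    apply min_eq_right; positivity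
  rcases le_or_gt ((i : ℕ) + 1) d with h | h
  · have harg : max (min (((i : ℕ) : ℝ) + 1) 0) (((i : ℕ) : ℝ) + 1 - d) = 0 := by
      rw [hmin]
      apply max_eq_left
      have : ((i : ℕ) : ℝ) + 1 ≤ (d : ℝ) := by exact_mod_cast h
      linarith
    have : pathP k d e 0 i = 0 := by
      simp only [pathP, harg]
      have := glueFn_natCast k e 0 (by omega)
      simpa [he0] using this
    rw [this]; exact hy0 i
  · set j : ℕ := (i : ℕ) - d with hj
    have hjk : j < k := by have := i.isLt; omega
    have hid : (i : ℕ) = d + j := by omega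
    have harg : max (min (((i : ℕ) : ℝ) + 1) 0) (((i : ℕ) : ℝ) + 1 - d) = ((j : ℕ) : ℝ) + 1 := by
      rw [hmin]
      have h1 : ((i : ℕ) : ℝ) + 1 - d = (j : ℝ) + 1 := by
        rw [hid]; push_cast; ring
      rw [h1]
      apply max_eq_right; positivity
    have hP : pathP k d e 0 i = e (j + 1) := by
      have hcast : (j : ℝ) + 1 = ((j + 1 : ℕ) : ℝ) := by push_cast; ring
      simp only [pathP]
      rw [harg, hcast, glueFn_natCast k e _ (by omega), he0]; ring
    obtain ⟨iw, hiw, hle⟩ := hwit ⟨j, hjk⟩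
    simp only [Fin.val_mk] at hiw hle
    rw [hP, ← hiw]
    exact hmono (by rw [Fin.le_def]; omega)

lemma pathP_top {k d n : ℕ} {e : ℕ → ℝ} (he : Monotone e) (he0 : e 0 = 0) (he1 : e (k+1) = 1)
    (hkd : d + k = n)
    (y : Fin n → ℝ) (hmono : Monotone y) (hy1 : ∀ i, y i ≤ 1)
    (hwit : ∀ j : Fin k, ∃ i : Fin n, y i = e ((j : ℕ) + 1) ∧ (j : ℕ) ≤ (i : ℕ))
    (i : Fin n) : y i ≤ pathP k d e ((k : ℝ) + 1) i := by
  rcases lt_or_ge (i : ℕ) k with h | h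
  · have harg : max (min (((i : ℕ) : ℝ) + 1) ((k : ℝ) + 1)) (((i : ℕ) : ℝ) + 1 - d)
        = ((i : ℕ) : ℝ) + 1 := by
      have h1 : ((i : ℕ) : ℝ) + 1 ≤ (k : ℝ) + 1 := by
        have : ((i : ℕ) : ℝ) ≤ (k : ℝ) := by exact_mod_cast h.le
        linarith
      rw [min_eq_left h1]
      apply max_eq_left
      have : (0:ℝ) ≤ (d : ℝ) := by positivity
      linarith
    have hP : pathP k d e ((k : ℝ) + 1) i = e ((i : ℕ) + 1) := by
      have hcast : ((i : ℕ) : ℝ) + 1 = (((i : ℕ) + 1 : ℕ) : ℝ) := by push_cast; ring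
      simp only [pathP]
      rw [harg, hcast, glueFn_natCast k e _ (by omega), he0]; ring
    obtain ⟨iw, hiw, hle⟩ := hwit ⟨(i : ℕ), h⟩
    simp only [Fin.val_mk] at hiw hle
    rw [hP, ← hiw]
    exact hmono (by rw [Fin.le_def]; omega)
  · have harg : max (min (((i : ℕ) : ℝ) + 1) ((k : ℝ) + 1)) (((i : ℕ) : ℝ) + 1 - d)
        = (k : ℝ) + 1 := by
      have h1 : (k : ℝ) + 1 ≤ ((i : ℕ) : ℝ) + 1 := by
        have : (k : ℝ) ≤ ((i : ℕ) : ℝ) := by exact_mod_cast h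
        linarith
      rw [min_eq_right h1]
      apply max_eq_left
      have h2 : (i : ℕ) + 1 ≤ d + k + 1 := by have := i.isLt; omega
      have : ((i : ℕ) : ℝ) + 1 ≤ (d : ℝ) + k + 1 := by exact_mod_cast h2
      linarith
    have hP : pathP k d e ((k : ℝ) + 1) i = 1 := by
      have hcast : (k : ℝ) + 1 = ((k + 1 : ℕ) : ℝ) := by push_cast; ring
      simp only [pathP]
      rw [harg, hcast, glueFn_natCast k e _ le_rfl, he0, he1]; ring
    rw [hP]; exact hy1 i


/-- Fix `n ≥ 0` and a subset `S` of the open interval `(0, 1)` of cardinality at most `n`.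
The space `Y` of weakly increasing sequences `0 ≤ y₁ ≤ ⋯ ≤ yₙ ≤ 1` whose set of entries
contains `S`, topologized as a subspace of `ℝⁿ`, is contractible. -/
theorem contractible_ordered_sequences_containing
    (n : ℕ) (S : Set ℝ) (hS : S ⊆ Set.Ioo (0 : ℝ) 1) (hfin : S.Finite) (hcard : S.ncard ≤ n) :
    ContractibleSpace
      {y : Fin n → ℝ // Monotone y ∧ (∀ i, y i ∈ Set.Icc (0 : ℝ) 1) ∧ S ⊆ Set.range y} := by
  classical
  set k := hfin.toFinset.card with hk
  have hkn : k ≤ n := by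
    rw [Set.ncard_eq_toFinset_card S hfin] at hcard
    omega
  set d := n - k with hd
  have hkd : d + k = n := by omega
  set s : Fin k ↪o ℝ := hfin.toFinset.orderEmbOfFin rfl with hsdef
  have hsS : ∀ j, s j ∈ S := by
    intro j
    have := Finset.orderEmbOfFin_mem hfin.toFinset rfl j
    rwa [Set.Finite.mem_toFinset] at this
  have hs01 : ∀ j, s j ∈ Set.Ioo (0:ℝ) 1 := fun j => hS (hsS j)
  -- the node values
  set e : ℕ → ℝ := fun m => if h : 1 ≤ m ∧ m ≤ k then s ⟨m - 1, by omega⟩ else if m = 0 then 0 else 1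
    with he_def
  have he0 : e 0 = 0 := by simp [he_def]
  have he1 : e (k + 1) = 1 := by simp [he_def]
  have hes : ∀ j : Fin k, e ((j : ℕ) + 1) = s j := by
    intro j
    have hj : 1 ≤ (j : ℕ) + 1 ∧ (j : ℕ) + 1 ≤ k := ⟨by omega, by have := j.isLt; omega⟩
    simp only [he_def, dif_pos hj]
    congr 1
  have he01 : ∀ m, e m ∈ Set.Icc (0:ℝ) 1 := by
    intro m
    simp only [he_def]
    split_ifs with h1 h2
    · exact ⟨(hs01 _).1.le, (hs01 _).2.le⟩
    · exact ⟨le_rfl, zero_le_one⟩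
    · exact ⟨zero_le_one, le_rfl⟩
  have he1' : ∀ m, k < m → e m = 1 := by
    intro m hm
    simp only [he_def]
    rw [dif_neg (by omega), if_neg (by omega)]
  have hee : Monotone e := by
    intro a b hab
    rcases Nat.eq_zero_or_pos a with rfl | ha
    · rw [he0]; exact (he01 b).1
    · rcases le_or_gt b k with hbk | hbk
      · have hak : a ≤ k := hab.trans hbk
        have hb1 : 1 ≤ b := by omega
        simp only [he_def]
        rw [dif_pos ⟨ha, hak⟩, dif_pos ⟨hb1, hbk⟩]
        exact s.monotone (Fin.mk_le_mk.mpr (by omega))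
      · rw [he1' b hbk]; exact (he01 a).2
  have hSe : ∀ x ∈ S, ∃ j : Fin k, x = e ((j : ℕ) + 1) := by
    intro x hx
    have hx' : x ∈ hfin.toFinset := hfin.mem_toFinset.mpr hx
    have : x ∈ Set.range s := by
      rw [hsdef, Finset.range_orderEmbOfFin]
      exact_mod_cast hx'
    obtain ⟨j, hj⟩ := this
    exact ⟨j, by rw [hes j, hj]⟩
  -- witnesses with position bounds
  have hwit : ∀ y : Fin n → ℝ, Monotone y → S ⊆ Set.range y →
      ∀ j : Fin k, ∃ i : Fin n, y i = e ((j : ℕ) + 1) ∧ (j : ℕ) ≤ (i : ℕ) ∧ (i : ℕ) ≤ d + (j : ℕ) := by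
    intro y hmono hrange j
    have hch : ∀ j' : Fin k, ∃ i : Fin n, y i = s j' := fun j' => hrange (hsS j')
    choose w hw using hch
    have hsm : StrictMono w := by
      intro a b hab
      have hsab : y (w a) < y (w b) := by rw [hw a, hw b]; exact s.strictMono hab
      by_contra hcon
      push_neg at hcon
      exact absurd (hmono hcon) (not_le.mpr hsab)
    refine ⟨w j, by rw [hw j, hes j], strictMono_fin_le hsm j, ?_⟩
    have := strictMono_fin_ge hsm j
    omega
  -- membership of the sup of an element with the path
  have hmem : ∀ (u : ℝ) (y : Fin n → ℝ),
      (Monotone y ∧ (∀ i, y i ∈ Set.Icc (0 : ℝ) 1) ∧ S ⊆ Set.range y) →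
      (Monotone (fun i => max (y i) (pathP k d e u i)) ∧
        (∀ i, max (y i) (pathP k d e u i) ∈ Set.Icc (0 : ℝ) 1) ∧
        S ⊆ Set.range (fun i => max (y i) (pathP k d e u i))) := by
    intro u y hy
    obtain ⟨hymono, hy01, hyrange⟩ := hy
    refine ⟨fun a b hab => max_le_max (hymono hab) (pathP_mono hee u hab), ?_, ?_⟩
    · intro i
      exact ⟨le_max_of_le_left (hy01 i).1, max_le (hy01 i).2 (pathP_mem01 hee he0 he1 u i).2⟩
    · intro x hx
      obtain ⟨j, rfl⟩ := hSe x hx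
      obtain ⟨iy, hiy, _, _⟩ := hwit y hymono hyrange j
      obtain ⟨ip, hip⟩ := pathP_wit (n := n) (d := d) e he0 hkd u j
      rcases le_total iy ip with hc | hc
      · refine ⟨iy, ?_⟩
        have : pathP k d e u iy ≤ pathP k d e u ip := pathP_mono hee u hc
        rw [hip] at this
        simp only [hiy]
        exact max_eq_left this
      · refine ⟨ip, ?_⟩
        have : y ip ≤ y iy := hymono hc
        rw [hiy] at this
        simp only [hip]
        exact max_eq_right this
  have hPmem : ∀ u : ℝ, (Monotone (fun i : Fin n => pathP k d e u i) ∧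
      (∀ i : Fin n, pathP k d e u i ∈ Set.Icc (0 : ℝ) 1) ∧
      S ⊆ Set.range (fun i : Fin n => pathP k d e u i)) := by
    intro u
    refine ⟨pathP_mono hee u, fun i => pathP_mem01 hee he0 he1 u i, ?_⟩
    intro x hx
    obtain ⟨j, rfl⟩ := hSe x hx
    exact pathP_wit (n := n) (d := d) e he0 hkd u j
  rw [contractible_iff_id_nullhomotopic]
  refine ⟨⟨fun i => pathP k d e ((k : ℝ) + 1) i, hPmem _⟩, ⟨?_⟩⟩
  refine
    { toFun := fun q =>
        ⟨fun i => max (q.2.val i) (pathP k d e (((k : ℝ) + 1) * (q.1 : ℝ)) i),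
          hmem _ _ q.2.prop⟩
      continuous_toFun := ?_
      map_zero_left := ?_
      map_one_left := ?_ }
  · apply Continuous.subtype_mk
    apply continuous_pi
    intro i
    apply Continuous.max
    · exact (continuous_apply i).comp (continuous_subtype_val.comp continuous_snd)
    · refine (glueFn_continuous k e).comp ?_
      fun_prop
  · intro y
    apply Subtype.ext
    funext i
    have h0 : ((k : ℝ) + 1) * ((0 : unitInterval) : ℝ) = 0 := by norm_num
    simp only [h0]
    exact max_eq_left (pathP_bot hee he0 hkd y.val y.prop.1 (fun i => (y.prop.2.1 i).1)
      (fun j => (hwit y.val y.prop.1 y.prop.2.2 j).imp (fun i hi => ⟨hi.1, hi.2.2⟩)) i)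
  · intro y
    apply Subtype.ext
    funext i
    have h1 : ((k : ℝ) + 1) * ((1 : unitInterval) : ℝ) = (k : ℝ) + 1 := by norm_num
    simp only [h1]
    exact max_eq_right (pathP_top hee he0 he1 hkd y.val y.prop.1 (fun i => (y.prop.2.1 i).2)
      (fun j => (hwit y.val y.prop.1 y.prop.2.2 j).imp (fun i hi => ⟨hi.1, hi.2.1⟩)) i)
end
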